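/- Let n ≥ 2, A > 0, α ≥ 0, η > 0, a > 2, and let β satisfy n+1 ≤ β < α + 2n − 1 − (2n−2)/a; set b = 2(n+α)/(a(β−n+1) + 2n − 2). Then there exists ε > 0 (depending only on a, η, A, α, β and n) such that the function W(x) = −((x_n/ε)^{2/a} − |x'|²)^{1/b} satisfies det D²W(x) ≥ A·x_n^{β−n−1}·|W(x)|^{−α} at every point x = (x', x_n) with x_n > 0 and x_n ≥ η·|x'|^a, where det D²W denotes the determinant of the Hessian matrix of W. -/

import Mathlib

/-- The determinant of the Hessian matrix of `u` at `x`. -/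
noncomputable def hessianDet {n : ℕ} (u : EuclideanSpace ℝ (Fin n) → ℝ)
    (x : EuclideanSpace ℝ (Fin n)) : ℝ :=
  (Matrix.of fun i j : Fin n =>
    iteratedFDeriv ℝ 2 u x ![EuclideanSpace.single i (1 : ℝ), EuclideanSpace.single j (1 : ℝ)]).det

/-- The last coordinate index of `Fin n`. -/
def lastIdx (n : ℕ) (hn : 0 < n) : Fin n := ⟨n - 1, Nat.sub_lt hn one_pos⟩

namespace MAaux
open Finset

variable {n : ℕ}

noncomputable abbrev proj (j : Fin n) : EuclideanSpace ℝ (Fin n) →L[ℝ] ℝ :=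
  EuclideanSpace.proj j

def rf (ℓ : Fin n) (x : EuclideanSpace ℝ (Fin n)) : ℝ := ∑ j ∈ univ.erase ℓ, x j ^ 2

noncomputable def ff (ℓ : Fin n) (m ε : ℝ) (x : EuclideanSpace ℝ (Fin n)) : ℝ :=
  (x ℓ / ε) ^ m - rf ℓ x

noncomputable def Wf (ℓ : Fin n) (m c ε : ℝ) (x : EuclideanSpace ℝ (Fin n)) : ℝ :=
  -(ff ℓ m ε x ^ c)

noncomputable def Gf (ℓ : Fin n) (m ε : ℝ) (y : EuclideanSpace ℝ (Fin n)) :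
    EuclideanSpace ℝ (Fin n) →L[ℝ] ℝ :=
  (m / ε * (y ℓ / ε) ^ (m - 1)) • proj ℓ - ∑ j ∈ univ.erase ℓ, (2 * y j) • proj j

noncomputable def DWf (ℓ : Fin n) (m c ε : ℝ) (y : EuclideanSpace ℝ (Fin n)) :
    EuclideanSpace ℝ (Fin n) →L[ℝ] ℝ :=
  (-(c * ff ℓ m ε y ^ (c - 1))) • Gf ℓ m ε y

lemma Gf_apply_single (ℓ : Fin n) (m ε : ℝ) (y : EuclideanSpace ℝ (Fin n)) (i : Fin n) :
    Gf ℓ m ε y (EuclideanSpace.single i 1) =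
      if i = ℓ then m / ε * (y ℓ / ε) ^ (m - 1) else -2 * y i := by
  have hp : ∀ j : Fin n, proj (n := n) j (EuclideanSpace.single i (1:ℝ)) = if j = i then 1 else 0 := by
    intro j; simp [EuclideanSpace.single_apply]
  simp only [Gf, ContinuousLinearMap.sub_apply, ContinuousLinearMap.smul_apply,
    ContinuousLinearMap.coe_sum', Finset.sum_apply, hp, smul_eq_mul, mul_ite, mul_one, mul_zero]
  rw [Finset.sum_ite_eq' (univ.erase ℓ) i (fun j => 2 * y j)]
  by_cases h : i = ℓ
  · simp [h, Finset.mem_erase]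
  · simp [h, Ne.symm h, Finset.mem_erase]

lemma hasFDerivAt_ff (ℓ : Fin n) (m ε : ℝ) (hε : 0 < ε)
    (y : EuclideanSpace ℝ (Fin n)) (hy : 0 < y ℓ) :
    HasFDerivAt (ff ℓ m ε) (Gf ℓ m ε y) y := by
  have h0 : HasFDerivAt (fun z : EuclideanSpace ℝ (Fin n) => z ℓ) (proj ℓ) y :=
    (proj (n := n) ℓ).hasFDerivAt
  have h1 : HasFDerivAt (fun z : EuclideanSpace ℝ (Fin n) => z ℓ / ε) (ε⁻¹ • proj ℓ) y := by
    simpa [div_eq_inv_mul] using h0.const_mul ε⁻¹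
  have hbase : y ℓ / ε ≠ 0 := by positivity
  have h2 := h1.rpow_const (p := m) (Or.inl hbase)
  have h3 : HasFDerivAt (rf ℓ) (∑ j ∈ univ.erase ℓ, (2 * y j) • proj (n := n) j) y := by
    apply HasFDerivAt.fun_sum
    intro j _
    have hj := (proj (n := n) j).hasFDerivAt (x := y)
    have := hj.mul hj
    have h2 : HasFDerivAt (fun z : EuclideanSpace ℝ (Fin n) => z j * z j)
        ((2 * y j) • proj (n := n) j) y := by
      refine this.congr_fderiv ?_
      rw [two_mul, add_smul]
      rfl
    have : (fun z : EuclideanSpace ℝ (Fin n) => z j ^ 2) = fun z => z j * z j := by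
      funext z; ring
    rw [this]
    exact h2
  have h4 := h2.sub h3
  refine h4.congr_fderiv ?_
  unfold Gf
  congr 1
  rw [smul_smul]
  congr 1
  ring

lemma hasFDerivAt_Wf (ℓ : Fin n) (m c ε : ℝ) (hε : 0 < ε)
    (y : EuclideanSpace ℝ (Fin n)) (hy : 0 < y ℓ) (hfy : 0 < ff ℓ m ε y) :
    HasFDerivAt (Wf ℓ m c ε) (DWf ℓ m c ε y) y := by
  have h := ((hasFDerivAt_ff ℓ m ε hε y hy).rpow_const (p := c) (Or.inl hfy.ne')).neg
  unfold Wf DWf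
  exact h.congr_fderiv (neg_smul _ _).symm

lemma isOpen_V (ℓ : Fin n) (m ε : ℝ) (hm : 0 ≤ m) :
    IsOpen {y : EuclideanSpace ℝ (Fin n) | 0 < y ℓ ∧ 0 < ff ℓ m ε y} := by
  have hc1 : Continuous fun y : EuclideanSpace ℝ (Fin n) => y ℓ := (proj (n := n) ℓ).continuous
  have hcf : Continuous (ff ℓ m ε) := by
    apply Continuous.sub
    · exact (Real.continuous_rpow_const hm).comp (hc1.div_const ε)
    · exact continuous_finset_sum _ fun j _ => ((proj (n := n) j).continuous.pow 2)
  exact (isOpen_lt continuous_const hc1).inter (isOpen_lt continuous_const hcf)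


lemma proj_single (i j : Fin n) :
    proj (n := n) j (EuclideanSpace.single i (1:ℝ)) = if j = i then 1 else 0 := by
  simp [EuclideanSpace.single_apply]

lemma differentiableAt_DWf (ℓ : Fin n) (m c ε : ℝ) (hε : 0 < ε)
    (x : EuclideanSpace ℝ (Fin n)) (hx : 0 < x ℓ) (hF : 0 < ff ℓ m ε x) :
    DifferentiableAt ℝ (DWf ℓ m c ε) x := by
  have hffd : DifferentiableAt ℝ (ff ℓ m ε) x := (hasFDerivAt_ff ℓ m ε hε x hx).differentiableAt
  have hφ : DifferentiableAt ℝ (fun y => -(c * ff ℓ m ε y ^ (c - 1))) x :=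
    ((hffd.rpow_const (Or.inl hF.ne')).const_mul c).neg
  have hb0 : x ℓ / ε ≠ 0 := by positivity
  have hbase : DifferentiableAt ℝ (fun y : EuclideanSpace ℝ (Fin n) => y ℓ / ε) x := by
    have h1 : HasFDerivAt (fun z : EuclideanSpace ℝ (Fin n) => z ℓ / ε)
        (ε⁻¹ • proj ℓ) x := by
      simpa [div_eq_inv_mul] using ((proj (n := n) ℓ).hasFDerivAt (x := x)).const_mul ε⁻¹
    exact h1.differentiableAt
  have hGd : DifferentiableAt ℝ (Gf ℓ m ε) x := by
    unfold Gf
    apply DifferentiableAt.sub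
    · exact ((hbase.rpow_const (Or.inl hb0)).const_mul _).smul_const _
    · apply DifferentiableAt.fun_sum
      intro j _
      exact (((proj (n := n) j).differentiableAt).const_mul 2).smul_const _
  exact hφ.smul hGd

lemma fderiv_DWf_apply (ℓ : Fin n) (m c ε : ℝ) (hε : 0 < ε)
    (x : EuclideanSpace ℝ (Fin n)) (hx : 0 < x ℓ) (hF : 0 < ff ℓ m ε x) (i j : Fin n) :
    fderiv ℝ (fun y => DWf ℓ m c ε y (EuclideanSpace.single j 1)) x (EuclideanSpace.single i 1) =
      (-(c * (c - 1) * ff ℓ m ε x ^ (c - 2)))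
          * (if i = ℓ then m / ε * (x ℓ / ε) ^ (m - 1) else -2 * x i)
          * (if j = ℓ then m / ε * (x ℓ / ε) ^ (m - 1) else -2 * x j)
        + (if i = j then
            (if i = ℓ then
              -(c * ff ℓ m ε x ^ (c - 1) * (m / ε * ((m - 1) * (x ℓ / ε) ^ (m - 2) / ε)))
             else 2 * c * ff ℓ m ε x ^ (c - 1))
           else 0) := by
  have hb0 : x ℓ / ε ≠ 0 := by positivity
  have Hf := hasFDerivAt_ff ℓ m ε hε x hx
  have Hφ0 := ((Hf.rpow_const (p := c - 1) (Or.inl hF.ne')).const_mul c).neg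
  have heqk : -(c • (((c - 1) * ff ℓ m ε x ^ (c - 1 - 1)) • Gf ℓ m ε x))
      = (-(c * (c - 1) * ff ℓ m ε x ^ (c - 2))) • Gf ℓ m ε x := by
    rw [smul_smul]; refine (neg_smul _ _).symm.trans ?_
    congr 1
    have h21 : c - 1 - 1 = c - 2 := by ring
    rw [h21]; ring
  rw [heqk] at Hφ0
  -- Hφ0 : HasFDerivAt (fun y => -(c * ff y ^ (c-1))) (k • Gf x) x
  have hfun : (fun y => DWf ℓ m c ε y (EuclideanSpace.single j 1))
      = fun y => (-(c * ff ℓ m ε y ^ (c - 1)))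
          * (if j = ℓ then m / ε * (y ℓ / ε) ^ (m - 1) else -2 * y j) := by
    funext y
    rw [DWf, ContinuousLinearMap.smul_apply, Gf_apply_single]
    rfl
  rw [hfun]
  by_cases hj : j = ℓ
  · subst hj
    have h0 : HasFDerivAt (fun z : EuclideanSpace ℝ (Fin n) => z j) (proj j) x :=
      (proj (n := n) j).hasFDerivAt
    have h1 : HasFDerivAt (fun z : EuclideanSpace ℝ (Fin n) => z j / ε) (ε⁻¹ • proj j) x := by
      simpa [div_eq_inv_mul] using h0.const_mul ε⁻¹
    have Hs := (h1.rpow_const (p := m - 1) (Or.inl hb0)).const_mul (m / ε)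
    have hfun2 : (fun y : EuclideanSpace ℝ (Fin n) =>
        -(c * ff j m ε y ^ (c - 1)) * if j = j then m / ε * (y j / ε) ^ (m - 1) else -2 * y j)
        = fun y => -(c * ff j m ε y ^ (c - 1)) * (m / ε * (y j / ε) ^ (m - 1)) := by
      funext y; rw [if_pos rfl]
    rw [hfun2]
    have H : HasFDerivAt (fun y : EuclideanSpace ℝ (Fin n) =>
        -(c * ff j m ε y ^ (c - 1)) * (m / ε * (y j / ε) ^ (m - 1))) _ x := Hφ0.mul Hs
    rw [H.fderiv]
    simp only [ContinuousLinearMap.add_apply, ContinuousLinearMap.smul_apply,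
      Gf_apply_single, proj_single, smul_eq_mul, Pi.neg_apply]
    clear H Hs h1 h0 hfun hfun2 heqk Hφ0 Hf
    split_ifs <;> (try subst_vars) <;> (try tauto) <;> ring
  · have hfun2 : (fun y : EuclideanSpace ℝ (Fin n) =>
        -(c * ff ℓ m ε y ^ (c - 1)) * if j = ℓ then m / ε * (y ℓ / ε) ^ (m - 1) else -2 * y j)
        = fun y => -(c * ff ℓ m ε y ^ (c - 1)) * (-2 * y j) := by
      funext y; rw [if_neg hj]
    rw [hfun2]
    have h0 : HasFDerivAt (fun z : EuclideanSpace ℝ (Fin n) => z j) (proj j) x :=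
      (proj (n := n) j).hasFDerivAt
    have Hs : HasFDerivAt (fun z : EuclideanSpace ℝ (Fin n) => -2 * z j)
        ((-2 : ℝ) • proj j) x := h0.const_mul (-2)
    have H : HasFDerivAt (fun y : EuclideanSpace ℝ (Fin n) =>
        -(c * ff ℓ m ε y ^ (c - 1)) * (-2 * y j)) _ x := Hφ0.mul Hs
    rw [H.fderiv]
    simp only [ContinuousLinearMap.add_apply, ContinuousLinearMap.smul_apply,
      Gf_apply_single, proj_single, smul_eq_mul, Pi.neg_apply]
    clear H Hs h0 hfun hfun2 heqk Hφ0 Hf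
    split_ifs <;> (try subst_vars) <;> (try tauto) <;> ring


noncomputable def vv (ℓ : Fin n) (m ε : ℝ) (x : EuclideanSpace ℝ (Fin n)) (i : Fin n) : ℝ :=
  if i = ℓ then m / ε * (x ℓ / ε) ^ (m - 1) else -2 * x i

noncomputable def dd (ℓ : Fin n) (m c ε : ℝ) (x : EuclideanSpace ℝ (Fin n)) (i : Fin n) : ℝ :=
  if i = ℓ then -(c * ff ℓ m ε x ^ (c - 1) * (m / ε * ((m - 1) * (x ℓ / ε) ^ (m - 2) / ε)))
  else 2 * c * ff ℓ m ε x ^ (c - 1)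

lemma fderiv_fderiv_Wf (ℓ : Fin n) (m c ε : ℝ) (hm0 : 0 < m) (hε : 0 < ε)
    (x : EuclideanSpace ℝ (Fin n)) (hx : 0 < x ℓ) (hF : 0 < ff ℓ m ε x) (i j : Fin n) :
    fderiv ℝ (fderiv ℝ (Wf ℓ m c ε)) x (EuclideanSpace.single i 1) (EuclideanSpace.single j 1) =
      (-(c * (c - 1) * ff ℓ m ε x ^ (c - 2))) * vv ℓ m ε x i * vv ℓ m ε x j
        + (if i = j then dd ℓ m c ε x i else 0) := by
  have hev : fderiv ℝ (Wf ℓ m c ε) =ᶠ[nhds x] DWf ℓ m c ε := by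
    filter_upwards [(isOpen_V ℓ m ε hm0.le).mem_nhds ⟨hx, hF⟩] with y hy
    exact (hasFDerivAt_Wf ℓ m c ε hε y hy.1 hy.2).fderiv
  rw [hev.fderiv_eq]
  have hdiff := differentiableAt_DWf ℓ m c ε hε x hx hF
  have h4 : fderiv ℝ (fun y => DWf ℓ m c ε y (EuclideanSpace.single j 1)) x
      = (fderiv ℝ (DWf ℓ m c ε) x).flip (EuclideanSpace.single j 1) := by
    rw [fderiv_clm_apply hdiff (differentiableAt_const _)]
    simp
  have h5 : fderiv ℝ (DWf ℓ m c ε) x (EuclideanSpace.single i 1) (EuclideanSpace.single j 1)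
      = fderiv ℝ (fun y => DWf ℓ m c ε y (EuclideanSpace.single j 1)) x
          (EuclideanSpace.single i 1) := by
    rw [h4]; rfl
  rw [h5, fderiv_DWf_apply ℓ m c ε hε x hx hF i j]
  simp only [vv, dd]

lemma hessianDet_Wf (ℓ : Fin n) (m c ε : ℝ) (hm0 : 0 < m) (hε : 0 < ε)
    (x : EuclideanSpace ℝ (Fin n)) (hx : 0 < x ℓ) (hF : 0 < ff ℓ m ε x) :
    hessianDet (Wf ℓ m c ε) x =
      (Matrix.of fun i j : Fin n =>
        (-(c * (c - 1) * ff ℓ m ε x ^ (c - 2))) * vv ℓ m ε x i * vv ℓ m ε x j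
          + (if i = j then dd ℓ m c ε x i else 0)).det := by
  unfold hessianDet
  congr 1
  ext i j
  simp only [Matrix.of_apply]
  rw [iteratedFDeriv_two_apply]
  have h0 : (![EuclideanSpace.single i (1:ℝ), EuclideanSpace.single j (1:ℝ)]) 0
      = EuclideanSpace.single i (1:ℝ) := rfl
  have h1 : (![EuclideanSpace.single i (1:ℝ), EuclideanSpace.single j (1:ℝ)]) 1
      = EuclideanSpace.single j (1:ℝ) := rfl
  rw [h0, h1]
  exact fderiv_fderiv_Wf ℓ m c ε hm0 hε x hx hF i j

lemma det_formula {n : ℕ} (k : ℝ) (v d : Fin n → ℝ) (hd : ∀ i, d i ≠ 0) :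
    (Matrix.of fun i j : Fin n => k * v i * v j + (if i = j then d i else 0)).det
      = (∏ i, d i) * (1 + ∑ i, k * v i ^ 2 / d i) := by
  have hM : (Matrix.of fun i j : Fin n => k * v i * v j + (if i = j then d i else 0))
      = Matrix.diagonal d + Matrix.replicateCol Unit (fun i => k * v i) * Matrix.replicateRow Unit v := by
    ext i j
    by_cases h : i = j <;>
      simp [Matrix.mul_apply, Matrix.diagonal_apply, h, add_comm]
  have hU : IsUnit (Matrix.diagonal d).det := by
    rw [Matrix.det_diagonal]
    exact (Finset.prod_ne_zero_iff.2 fun i _ => hd i).isUnit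
  rw [hM, Matrix.det_add_replicateCol_mul_replicateRow hU]
  rw [Matrix.det_diagonal, Matrix.det_unique]
  congr 1
  have hinv : (Matrix.diagonal d)⁻¹ = Matrix.diagonal (fun i => (d i)⁻¹) := by
    apply Matrix.inv_eq_right_inv
    rw [Matrix.diagonal_mul_diagonal]
    have h : (fun i => d i * (d i)⁻¹) = fun _ : Fin n => (1:ℝ) :=
      funext fun i => mul_inv_cancel₀ (hd i)
    rw [h]
    exact Matrix.diagonal_one
  rw [hinv]
  simp only [Matrix.add_apply, Matrix.one_apply_eq, Matrix.mul_apply, Matrix.replicateRow_apply,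
    Matrix.replicateCol_apply, Matrix.diagonal_apply, Finset.univ_unique, Finset.sum_singleton]
  congr 1
  apply Finset.sum_congr rfl
  intro i _
  have h : (∑ x1, v x1 * if x1 = i then (d x1)⁻¹ else 0) = v i * (d i)⁻¹ := by
    have h2 : ∀ x1 : Fin n, v x1 * (if x1 = i then (d x1)⁻¹ else 0)
        = if x1 = i then v x1 * (d x1)⁻¹ else 0 := by
      intro x1; rw [mul_ite, mul_zero]
    rw [Finset.sum_congr rfl (fun x1 _ => h2 x1),
      Finset.sum_ite_eq' Finset.univ i (fun x1 => v x1 * (d x1)⁻¹)]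
    simp
  rw [h, div_eq_mul_inv]
  ring

set_option maxHeartbeats 2000000 in
theorem aux (n : ℕ) (hn : 2 ≤ n) (ℓ : Fin n) (A α η a β b : ℝ) (hA : 0 < A) (hα : 0 ≤ α)
    (hη : 0 < η) (ha : 2 < a) (hβ : (n : ℝ) + 1 ≤ β)
    (hβ' : β < α + 2 * n - 1 - (2 * n - 2) / a)
    (hb : b = 2 * ((n : ℝ) + α) / (a * (β - n + 1) + 2 * n - 2)) :
    ∃ ε : ℝ, 0 < ε ∧
      ∀ x : EuclideanSpace ℝ (Fin n),
        0 < x ℓ →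
        η * Real.sqrt (∑ j ∈ Finset.univ.erase ℓ, x j ^ 2) ^ a ≤ x ℓ →
        A * x ℓ ^ (β - n - 1) *
            |-(((x ℓ / ε) ^ (2 / a) -
                ∑ j ∈ Finset.univ.erase ℓ, x j ^ 2) ^ (1 / b))| ^ (-α)
          ≤ hessianDet
              (fun y : EuclideanSpace ℝ (Fin n) =>
                -(((y ℓ / ε) ^ (2 / a) -
                    ∑ j ∈ Finset.univ.erase ℓ, y j ^ 2) ^ (1 / b))) x := by
  have ha0 : (0:ℝ) < a := by linarith
  have hn2 : (2:ℝ) ≤ (n:ℝ) := by exact_mod_cast hn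
  set m : ℝ := 2 / a with hm_def
  set c : ℝ := 1 / b with hc_def
  have hm0 : 0 < m := by positivity
  have hm1 : m < 1 := by rw [hm_def]; rw [div_lt_one ha0]; linarith
  have hβn : 2 ≤ β - n + 1 := by linarith
  have hD : 0 < a * (β - n + 1) + 2 * n - 2 := by nlinarith
  have hnα : 0 < (n:ℝ) + α := by linarith
  have hbpos : 0 < b := by rw [hb]; positivity
  have hc : c = (a * (β - n + 1) + 2 * n - 2) / (2 * ((n:ℝ) + α)) := by
    rw [hc_def, hb, one_div, inv_div]
  have hcpos : 0 < c := by rw [hc]; positivity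
  have hkey : a * (β - n + 1) + 2 * n - 2 < a * ((n:ℝ) + α) := by
    have h1 : (2 * (n:ℝ) - 2) / a * a = 2 * n - 2 := div_mul_cancel₀ _ ha0.ne'
    have h2 : (2 * (n:ℝ) - 2) / a < α + 2 * n - 1 - β := by linarith
    nlinarith [mul_lt_mul_of_pos_right h2 ha0]
  have hcm1 : c * m < 1 := by
    rw [hc, hm_def, div_mul_div_comm, div_lt_one (by positivity)]
    nlinarith
  have hcm0 : 0 < 1 - c * m := by linarith
  -- exponent bookkeeping
  set e1 : ℝ := (n:ℝ) * c - n - 1 with he1_def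
  have hcnα : c * ((n:ℝ) + α) = (a * (β - n + 1) + 2 * n - 2) / 2 := by
    rw [hc]; field_simp
  have hexpid : m * (e1 + 2 + c * α) = β - (n:ℝ) + 1 := by
    have h : e1 + 2 + c * α = c * ((n:ℝ) + α) - n + 1 := by rw [he1_def]; ring
    rw [h, hcnα, hm_def]; field_simp; ring
  -- constants
  set K1 : ℝ := min ((1/2 : ℝ) ^ e1) 1 with hK1_def
  have hK1 : 0 < K1 := lt_min (Real.rpow_pos_of_pos one_half_pos _) one_pos
  set K2 : ℝ := (1/2 : ℝ) ^ (-(c * α)) with hK2_def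
  have hK2 : 0 < K2 := Real.rpow_pos_of_pos one_half_pos _
  set C1 : ℝ := (2 * c) ^ (n - 2 : ℕ) * (c ^ 2 * m * (1 - c * m)) with hC1_def
  have hC1 : 0 < C1 := by
    apply mul_pos (pow_pos (by linarith) _)
    positivity
  -- choice of ε
  set T : ℝ := (1 - m) * |2 * c - 1| with hT_def
  have hT0 : 0 ≤ T := mul_nonneg (by linarith) (abs_nonneg _)
  set d0 : ℝ := min (1/2 : ℝ) ((1 - c * m) / 2 / (T + 1)) with hd0_def
  have hd0 : 0 < d0 := lt_min one_half_pos (by positivity)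
  set ε1 : ℝ := η * d0 ^ (1 / m) with hε1_def
  have hε1 : 0 < ε1 := mul_pos hη (Real.rpow_pos_of_pos hd0 _)
  set ε2 : ℝ := (C1 * K1 / (A * K2)) ^ (1 / (β - n + 1)) with hε2_def
  have hε2 : 0 < ε2 := Real.rpow_pos_of_pos (by positivity) _
  refine ⟨min ε1 ε2, lt_min hε1 hε2, ?_⟩
  set ε : ℝ := min ε1 ε2 with hε_def
  have hε : 0 < ε := lt_min hε1 hε2
  -- properties of ε
  have hδd0 : (ε / η) ^ m ≤ d0 := by
    have h1 : ε / η ≤ d0 ^ (1 / m) := by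
      rw [div_le_iff₀ hη]
      calc ε ≤ ε1 := min_le_left _ _
        _ = d0 ^ (1 / m) * η := by rw [hε1_def]; ring
    calc (ε / η) ^ m ≤ (d0 ^ (1 / m)) ^ m :=
          Real.rpow_le_rpow (by positivity) h1 hm0.le
      _ = d0 ^ (1 / m * m) := by rw [← Real.rpow_mul hd0.le]
      _ = d0 := by rw [one_div_mul_cancel hm0.ne', Real.rpow_one]
  have hδhalf : (ε / η) ^ m ≤ 1 / 2 := hδd0.trans (min_le_left _ _)
  have hδ2 : T * (ε / η) ^ m ≤ (1 - c * m) / 2 := by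
    have h1 : T * (ε / η) ^ m ≤ T * ((1 - c * m) / 2 / (T + 1)) :=
      mul_le_mul_of_nonneg_left (hδd0.trans (min_le_right _ _)) hT0
    have h2 : T * ((1 - c * m) / 2 / (T + 1)) ≤ (1 - c * m) / 2 := by
      have he : T * ((1 - c * m) / 2 / (T + 1)) = T * ((1 - c * m) / 2) / (T + 1) := by ring
      rw [he, div_le_iff₀ (by positivity)]
      nlinarith
    linarith
  have hβn1 : 0 < β - (n:ℝ) + 1 := by linarith
  have hεiii : ε ^ (β - (n:ℝ) + 1) ≤ C1 * K1 / (A * K2) := by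
    calc ε ^ (β - (n:ℝ) + 1) ≤ ε2 ^ (β - (n:ℝ) + 1) :=
          Real.rpow_le_rpow hε.le (min_le_right _ _) hβn1.le
      _ = (C1 * K1 / (A * K2)) ^ (1 / (β - n + 1) * (β - n + 1)) := by
          rw [hε2_def, ← Real.rpow_mul (by positivity)]
      _ = C1 * K1 / (A * K2) := by
          rw [one_div_mul_cancel hβn1.ne', Real.rpow_one]
  -- now the pointwise estimate
  intro x hx hreg
  set s : ℝ := x ℓ with hs_def
  set ρ : ℝ := ∑ j ∈ Finset.univ.erase ℓ, x j ^ 2 with hρ_def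
  have hρ0 : 0 ≤ ρ := by rw [hρ_def]; exact Finset.sum_nonneg fun j _ => sq_nonneg _
  have hs0 : 0 < s := hx
  have hsε : 0 < s / ε := by positivity
  set P : ℝ := (s / ε) ^ m with hP_def
  have hP : 0 < P := Real.rpow_pos_of_pos hsε _
  have hρδP : ρ ≤ P * (ε / η) ^ m := by
    have h1 : η * ρ ^ (1/2 * a) ≤ s := by
      have h0 : Real.sqrt ρ ^ a = ρ ^ (1/2 * a) := by
        rw [Real.sqrt_eq_rpow, ← Real.rpow_mul hρ0]
      rw [← h0]; exact hreg
    have h2 : ρ ^ (1/2 * a) ≤ s / η := by rw [le_div_iff₀ hη]; linarith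
    have h3 : (ρ ^ (1/2 * a)) ^ m ≤ (s / η) ^ m :=
      Real.rpow_le_rpow (Real.rpow_nonneg hρ0 _) h2 hm0.le
    have h4 : (ρ ^ (1/2 * a)) ^ m = ρ := by
      rw [← Real.rpow_mul hρ0, show 1/2 * a * m = 1 by rw [hm_def]; field_simp, Real.rpow_one]
    have h5 : (s / η) ^ m = P * (ε / η) ^ m := by
      rw [hP_def, show s / η = s / ε * (ε / η) by field_simp,
        Real.mul_rpow (by positivity) (by positivity)]
    calc ρ = (ρ ^ (1/2 * a)) ^ m := h4.symm
      _ ≤ (s / η) ^ m := h3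
      _ = P * (ε / η) ^ m := h5
  have hρP2 : ρ ≤ P / 2 := by
    have h6 : P * (ε / η) ^ m ≤ P * (1 / 2) := mul_le_mul_of_nonneg_left hδhalf hP.le
    linarith [hρδP]
  set F : ℝ := P - ρ with hF_def
  have hF0 : 0 < F := by rw [hF_def]; linarith [hρP2, hP]
  have hFhalf : P / 2 ≤ F := by rw [hF_def]; linarith
  have hFleP : F ≤ P := by rw [hF_def]; linarith [hρ0]
  have hffF : ff ℓ m ε x = F := by
    rw [hF_def, hP_def, hρ_def, hs_def]; rfl
  have hu0 : 0 < F ^ (c - 1) := Real.rpow_pos_of_pos hF0 _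
  set u : ℝ := F ^ (c - 1) with hu_def
  have hw : F ^ (c - 2) = u / F := by
    rw [hu_def, show c - 2 = c - 1 - 1 by ring, Real.rpow_sub hF0, Real.rpow_one]
  have ht : F ^ (2*c - 3) = u * u / F := by
    rw [hu_def, show 2*c - 3 = (c - 1) + (c - 1) - 1 by ring, Real.rpow_sub hF0,
      Real.rpow_add hF0, Real.rpow_one]
  have hpow1 : (s / ε) ^ (m - 1) = P * ε / s := by
    rw [hP_def, show m - 1 = m - 1 by rfl, Real.rpow_sub hsε, Real.rpow_one,
      div_div_eq_mul_div]
  have hpow2 : (s / ε) ^ (m - 2) = P * ε^2 / s^2 := by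
    rw [hP_def, show m - 2 = m - ((2:ℕ):ℝ) by norm_num, Real.rpow_sub hsε,
      Real.rpow_natCast, div_pow, div_div_eq_mul_div]
  have hvvℓ : vv ℓ m ε x ℓ = m * P / s := by
    rw [vv, if_pos rfl, ← hs_def, hpow1]
    field_simp
  have hvv_ne : ∀ i, i ≠ ℓ → vv ℓ m ε x i = -2 * x i := fun i hi => by rw [vv, if_neg hi]
  have hddℓ : dd ℓ m c ε x ℓ = c * m * (1 - m) * u * P / s^2 := by
    rw [dd, if_pos rfl, hffF, ← hs_def, hpow2, ← hu_def]
    field_simp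
    ring
  have hdd_ne : ∀ i, i ≠ ℓ → dd ℓ m c ε x i = 2 * c * u := fun i hi => by
    rw [dd, if_neg hi, hffF]
  have h1m : 0 < 1 - m := by linarith
  have hq0 : 0 < dd ℓ m c ε x ℓ := by
    rw [hddℓ]; positivity
  have hd : ∀ i, dd ℓ m c ε x i ≠ 0 := by
    intro i
    by_cases hi : i = ℓ
    · rw [hi]; exact hq0.ne'
    · rw [hdd_ne i hi]; positivity
  have hmain : hessianDet (fun y : EuclideanSpace ℝ (Fin n) =>
      -(((y ℓ / ε) ^ m - ∑ j ∈ Finset.univ.erase ℓ, y j ^ 2) ^ c)) x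
      = (2*c*u) ^ (n-2 : ℕ)
          * (2*c^2*m*(F^(2*c-3))*P/s^2 * ((1-c*m)*P - (1-m)*(2*c-1)*ρ)) := by
    rw [show (fun y : EuclideanSpace ℝ (Fin n) =>
      -(((y ℓ / ε) ^ m - ∑ j ∈ Finset.univ.erase ℓ, y j ^ 2) ^ c)) = Wf ℓ m c ε from rfl]
    rw [hessianDet_Wf ℓ m c ε hm0 hε x hx (by rw [hffF]; exact hF0),
      det_formula _ _ _ hd]
    have hprod : (∏ i, dd ℓ m c ε x i)
        = (c*m*(1-m)*u*P/s^2) * (2*c*u)^(n-1:ℕ) := by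
      rw [← Finset.mul_prod_erase Finset.univ _ (Finset.mem_univ ℓ), hddℓ]
      congr 1
      rw [Finset.prod_congr rfl (fun i hi => hdd_ne i (Finset.ne_of_mem_erase hi)),
        Finset.prod_const, Finset.card_erase_of_mem (Finset.mem_univ ℓ), Finset.card_univ,
        Fintype.card_fin]
    have hsum : (∑ i, (-(c * (c-1) * ff ℓ m ε x ^ (c-2))) * vv ℓ m ε x i ^ 2 / dd ℓ m c ε x i)
        = (-(c*(c-1)*(u/F))) * (m*P/s)^2 / (c*m*(1-m)*u*P/s^2) + (-2*(c-1)*(u/F)/u) * ρ := by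
      rw [← Finset.add_sum_erase Finset.univ _ (Finset.mem_univ ℓ)]
      congr 1
      · rw [hvvℓ, hddℓ, hffF, hw]
      · rw [Finset.sum_congr rfl (fun i hi => show
            (-(c * (c-1) * ff ℓ m ε x ^ (c-2))) * vv ℓ m ε x i ^ 2 / dd ℓ m c ε x i
              = (-2*(c-1)*(u/F)/u) * x i ^ 2 from ?_), ← Finset.mul_sum, ← hρ_def]
        rw [hffF, hw, hvv_ne i (Finset.ne_of_mem_erase hi),
          hdd_ne i (Finset.ne_of_mem_erase hi)]
        field_simp
    rw [hprod, hsum]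
    rw [show (n - 1 : ℕ) = (n - 2) + 1 from by omega, pow_succ, ht]
    have hρPF : ρ = P - F := by rw [hF_def]; ring
    rw [hρPF]
    field_simp
    ring
  rw [hmain]
  have habs : |(-(F ^ c))| = F ^ c := by
    rw [abs_neg, abs_of_pos (Real.rpow_pos_of_pos hF0 _)]
  rw [habs]
  have hca : c * (-α) ≤ 0 := by
    have h0 : 0 ≤ c * α := mul_nonneg hcpos.le hα
    have h1 : c * (-α) = -(c * α) := by ring
    linarith [h1.le, h1.ge]
  have hWbound : (F ^ c) ^ (-α) ≤ K2 * P ^ (-(c*α)) := by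
    have h1 : (F ^ c) ^ (-α) = F ^ (c * (-α)) := (Real.rpow_mul hF0.le c (-α)).symm
    have h2 : F ^ (c * (-α)) ≤ (P/2) ^ (c * (-α)) :=
      Real.rpow_le_rpow_of_nonpos (by positivity) hFhalf hca
    have h3 : ((P:ℝ)/2) ^ (c * (-α)) = K2 * P ^ (-(c*α)) := by
      rw [show (P/2 : ℝ) = P * (1/2) by ring,
        Real.mul_rpow hP.le (by norm_num), show c * (-α) = -(c*α) by ring, hK2_def]
      ring
    calc (F ^ c) ^ (-α) = F ^ (c * (-α)) := h1
      _ ≤ (P/2) ^ (c * (-α)) := h2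
      _ = K2 * P ^ (-(c*α)) := h3
  have hPe1 : 0 ≤ P ^ e1 := (Real.rpow_pos_of_pos hP _).le
  have hFe1 : K1 * P ^ e1 ≤ F ^ e1 := by
    rcases le_or_gt 0 e1 with he | he
    · have h1 : (P/2) ^ e1 ≤ F ^ e1 := Real.rpow_le_rpow (by positivity) hFhalf he
      have h2 : ((P:ℝ)/2) ^ e1 = (1/2:ℝ)^e1 * P ^ e1 := by
        rw [show (P/2:ℝ) = P * (1/2) by ring, Real.mul_rpow hP.le (by norm_num)]; ring
      have h3 : K1 ≤ (1/2:ℝ)^e1 := min_le_left _ _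
      have h4 : K1 * P ^ e1 ≤ (1/2:ℝ)^e1 * P^e1 := mul_le_mul_of_nonneg_right h3 hPe1
      linarith [h1, h4, h2.le, h2.ge]
    · have h1 : P ^ e1 ≤ F ^ e1 := Real.rpow_le_rpow_of_nonpos hF0 hFleP he.le
      have h3 : K1 ≤ 1 := min_le_right _ _
      have h4 : K1 * P ^ e1 ≤ 1 * P^e1 := mul_le_mul_of_nonneg_right h3 hPe1
      linarith [h1, h4]
  have hucast : u ^ (n-2:ℕ) = F ^ ((c-1) * ((n:ℝ) - 2)) := by
    rw [hu_def, ← Real.rpow_natCast (F ^ (c-1)) (n-2), ← Real.rpow_mul hF0.le]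
    congr 1
    rw [Nat.cast_sub hn]
    push_cast
    ring
  have hFadd : F ^ ((c-1) * ((n:ℝ) - 2)) * F ^ (2*c-3) = F ^ e1 := by
    rw [← Real.rpow_add hF0, he1_def]
    congr 1
    ring
  have hF23 : 0 < F ^ (2*c-3) := Real.rpow_pos_of_pos hF0 _
  have hstep : C1 * ((K1 * P ^ e1) * P ^ 2 / s ^ 2)
      ≤ (2*c*u) ^ (n-2:ℕ)
          * (2*c^2*m*(F^(2*c-3))*P/s^2 * ((1-c*m)*P - (1-m)*(2*c-1)*ρ)) := by
    have hB : (1-c*m)/2 * P ≤ (1-c*m)*P - (1-m)*(2*c-1)*ρ := by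
      have l1 : (1-m)*(2*c-1) ≤ T := by
        rw [hT_def]
        exact mul_le_mul_of_nonneg_left (le_abs_self _) (by linarith)
      have l2 : (1-m)*(2*c-1)*ρ ≤ T * ρ := mul_le_mul_of_nonneg_right l1 hρ0
      have l3 : T * ρ ≤ T * (P * (ε/η)^m) := mul_le_mul_of_nonneg_left hρδP hT0
      have l5 : T * (ε/η)^m * P ≤ (1-c*m)/2 * P := mul_le_mul_of_nonneg_right hδ2 hP.le
      have l6 : T * (P * (ε/η)^m) = T * (ε/η)^m * P := by ring
      linarith [l2, l3, l5, l6.le, l6.ge]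
    have hc2 : 0 < 2*c^2*m*(F^(2*c-3))*P/s^2 := by positivity
    calc C1 * ((K1 * P ^ e1) * P ^ 2 / s ^ 2)
        ≤ C1 * ((F ^ e1) * P ^ 2 / s ^ 2) := by
          apply mul_le_mul_of_nonneg_left _ hC1.le
          have h7 : K1 * P ^ e1 * P ^ 2 ≤ F ^ e1 * P ^ 2 :=
            mul_le_mul_of_nonneg_right hFe1 (sq_nonneg P)
          exact (div_le_div_iff_of_pos_right (by positivity : (0:ℝ) < s ^ 2)).2 h7
      _ = (2*c*u) ^ (n-2:ℕ) * (2*c^2*m*(F^(2*c-3))*P/s^2 * ((1-c*m)/2 * P)) := by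
          rw [show ((2*c*u):ℝ)^(n-2:ℕ) = (2*c)^(n-2:ℕ) * u^(n-2:ℕ) from mul_pow _ _ _,
            hucast, ← hFadd, hC1_def]
          ring
      _ ≤ (2*c*u) ^ (n-2:ℕ)
            * (2*c^2*m*(F^(2*c-3))*P/s^2 * ((1-c*m)*P - (1-m)*(2*c-1)*ρ)) := by
          apply mul_le_mul_of_nonneg_left (mul_le_mul_of_nonneg_left hB hc2.le) (by positivity)
  have hεpow : 0 < ε ^ (β - (n:ℝ) + 1) := Real.rpow_pos_of_pos hε _
  have hfinal : A * K2 ≤ C1 * K1 / ε ^ (β - (n:ℝ) + 1) := by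
    rw [le_div_iff₀ hεpow]
    calc A * K2 * ε ^ (β - (n:ℝ) + 1) ≤ A * K2 * (C1 * K1 / (A * K2)) := by
          apply mul_le_mul_of_nonneg_left hεiii (by positivity)
      _ = C1 * K1 := by field_simp
  have e3 : P ^ (c*α) * P ^ (-(c*α)) = 1 := by
    rw [← Real.rpow_add hP]
    simp
  have e1' : P ^ (e1 + 2 + c*α) = s ^ (β-(n:ℝ)+1) / ε ^ (β-(n:ℝ)+1) := by
    rw [hP_def, ← Real.rpow_mul hsε.le, hexpid, Real.div_rpow hs0.le hε.le]
  have e2 : P ^ (e1 + 2 + c*α) = P ^ e1 * P ^ (2:ℕ) * P ^ (c*α) := by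
    rw [show e1 + 2 + c*α = (e1 + 2) + c*α by ring, Real.rpow_add hP,
      show e1 + 2 = e1 + ((2:ℕ):ℝ) by norm_num, Real.rpow_add hP, Real.rpow_natCast]
  have e4 : s ^ (β-(n:ℝ)+1) = s ^ (β-(n:ℝ)-1) * s ^ (2:ℕ) := by
    rw [← Real.rpow_natCast s 2, ← Real.rpow_add hs0]
    congr 1
    push_cast
    ring
  have hPkey : P ^ e1 * P ^ (2:ℕ)
      = (s ^ (β-(n:ℝ)-1) * s ^ (2:ℕ) / ε ^ (β-(n:ℝ)+1)) * P ^ (-(c*α)) := by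
    calc P ^ e1 * P ^ (2:ℕ) = P ^ e1 * P ^ (2:ℕ) * (P ^ (c*α) * P ^ (-(c*α))) := by
          rw [e3, mul_one]
      _ = P ^ (e1 + 2 + c*α) * P ^ (-(c*α)) := by rw [e2]; ring
      _ = (s ^ (β-(n:ℝ)+1) / ε ^ (β-(n:ℝ)+1)) * P ^ (-(c*α)) := by rw [e1']
      _ = (s ^ (β-(n:ℝ)-1) * s ^ (2:ℕ) / ε ^ (β-(n:ℝ)+1)) * P ^ (-(c*α)) := by rw [e4]
  have hident : C1 * ((K1 * P ^ e1) * P ^ 2 / s ^ 2)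
      = (C1 * K1 / ε ^ (β - (n:ℝ) + 1)) * (s ^ (β-(n:ℝ)-1) * P ^ (-(c*α))) := by
    have h0 : (K1 * P ^ e1) * P ^ 2 = K1 * (P ^ e1 * P ^ (2:ℕ)) := by ring
    rw [h0, hPkey]
    field_simp
  calc A * s ^ (β - (n:ℝ) - 1) * (F ^ c) ^ (-α)
      ≤ A * s ^ (β - (n:ℝ) - 1) * (K2 * P ^ (-(c*α))) := by
        apply mul_le_mul_of_nonneg_left hWbound (by positivity)
    _ = (A * K2) * (s ^ (β-(n:ℝ)-1) * P ^ (-(c*α))) := by ring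
    _ ≤ (C1 * K1 / ε ^ (β - (n:ℝ) + 1)) * (s ^ (β-(n:ℝ)-1) * P ^ (-(c*α))) := by
        apply mul_le_mul_of_nonneg_right hfinal (by positivity)
    _ = C1 * ((K1 * P ^ e1) * P ^ 2 / s ^ 2) := hident.symm
    _ ≤ _ := hstep


end MAaux

/-- There is `ε > 0` such that `W(x) = -((xₙ/ε)^{2/a} - |x'|²)^{1/b}` with
`b = 2(n+α)/(a(β-n+1)+2n-2)` satisfies `det D²W ≥ A xₙ^{β-n-1} |W|^{-α}`
on the region `{xₙ > 0, xₙ ≥ η |x'|^a}`. -/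
theorem exists_subsolution_aEta_region
    (n : ℕ) (hn : 2 ≤ n) (A α η a β b : ℝ) (hA : 0 < A) (hα : 0 ≤ α) (hη : 0 < η)
    (ha : 2 < a) (hβ : (n : ℝ) + 1 ≤ β) (hβ' : β < α + 2 * n - 1 - (2 * n - 2) / a)
    (hb : b = 2 * ((n : ℝ) + α) / (a * (β - n + 1) + 2 * n - 2)) :
    ∃ ε : ℝ, 0 < ε ∧
      ∀ x : EuclideanSpace ℝ (Fin n),
        0 < x (lastIdx n (by omega)) →
        η * Real.sqrt (∑ j ∈ Finset.univ.erase (lastIdx n (by omega)), x j ^ 2) ^ a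
            ≤ x (lastIdx n (by omega)) →
        A * x (lastIdx n (by omega)) ^ (β - n - 1) *
            |-(((x (lastIdx n (by omega)) / ε) ^ (2 / a) -
                ∑ j ∈ Finset.univ.erase (lastIdx n (by omega)), x j ^ 2) ^ (1 / b))| ^ (-α)
          ≤ hessianDet
              (fun y : EuclideanSpace ℝ (Fin n) =>
                -(((y (lastIdx n (by omega)) / ε) ^ (2 / a) -
                    ∑ j ∈ Finset.univ.erase (lastIdx n (by omega)), y j ^ 2) ^ (1 / b))) x :=
  MAaux.aux n hn (lastIdx n (by omega)) A α η a β b hA hα hη ha hβ hβ' hb
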